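/- Let f : X → S and g : Y → S be morphisms of schemes, D an effective Cartier divisor on S, and suppose both f and g satisfy the condition that no irreducible component of the source maps into |D|. If g factors through f via a proper surjective morphism h : Y → X (g = f ∘ h), then the strict transforms along the blow-up of S at any closed subscheme Z with f^{−1}(Z), g^{−1}(Z) containing no component, satisfy: the induced morphism between strict transforms Ỹ → X̃ is proper and surjective. -/

import Mathlib

open AlgebraicGeometry CategoryTheory TopologicalSpace

/-!
Statement 8 (key point of the Factorization Lemma `l-containment`): let `g = f ∘ h`
with `h : Y → X` proper surjective, and take strict transforms along a blow-up of the
base.  Then the induced morphism `p : Ỹ → X̃` between the strict transforms is proper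
and surjective.

We formalize the geometric argument of the paper: we are given the commutative square
`p ≫ a = bm ≫ h`, where `a : X̃ → X` is the blow-up (proper, and an isomorphism over a
dense open `U ⊆ X` whose preimage is dense in `X̃` — this is the birationality of the
strict transform, since no component of `X` maps into the center), `bm : Ỹ → Y` is
the blow-up of `Y` (proper and surjective), and `h : Y → X` is proper surjective.
Conclusion: `p` is proper and surjective.  (Properness: `p ≫ a = bm ≫ h` is proper
and `a` is separated; surjectivity: the image of `p` is closed with dense image
in `X̃`.)
-/

theorem statement8 {Yt Xt X Y : Scheme} (p : Yt ⟶ Xt) (a : Xt ⟶ X)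
    (bm : Yt ⟶ Y) (h : Y ⟶ X)
    (hsq : p ≫ a = bm ≫ h)
    [IsProper bm] [IsProper h] [IsProper a] [IsSeparated a]
    (hbsurj : Function.Surjective bm.base) (hhsurj : Function.Surjective h.base)
    (U : X.Opens) (hU : Dense (U : Set X))
    (hinj : Set.InjOn a.base (a.base ⁻¹' (U : Set X)))
    (hdense : Dense (a.base ⁻¹' (U : Set X))) :
    IsProper p ∧ Function.Surjective p.base := by
  have hcomp : IsProper (p ≫ a) := by
    rw [hsq]; exact MorphismProperty.comp_mem @IsProper bm h ‹_› ‹_›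
  have hpost : MorphismProperty.HasOfPostcompProperty @IsProper @IsSeparated :=
    (MorphismProperty.hasOfPostcompProperty_iff_le_diagonal).mpr
      (fun X Y f hf ↦ by
        have : IsSeparated f := hf
        show IsProper (Limits.pullback.diagonal f)
        infer_instance)
  have hp : IsProper p := hpost.of_postcomp p a ‹IsSeparated a› hcomp
  refine ⟨hp, ?_⟩
  have hclosed : IsClosed (Set.range p.base) := by
    simpa using p.isClosedMap _ isClosed_univ
  have hsub : a.base ⁻¹' (U : Set X) ⊆ Set.range p.base := by
    intro x hx
    obtain ⟨y, hy⟩ := hhsurj (a.base x)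
    obtain ⟨z, hz⟩ := hbsurj y
    have heq : a.base (p.base z) = a.base x := by
      have := congrArg (fun m : Yt ⟶ X => m.base z) hsq
      simp only [Scheme.Hom.comp_apply, TopCat.comp_app] at this
      rw [this, hz, hy]
    have hz' : p.base z ∈ a.base ⁻¹' (U : Set X) := by
      simp only [Set.mem_preimage, heq]; exact hx
    exact ⟨z, hinj hz' hx heq⟩
  have : Dense (Set.range p.base) := hdense.mono hsub
  have huniv : Set.range p.base = Set.univ := hclosed.closure_eq ▸ this.closure_eq
  exact Set.range_eq_univ.mp huniv
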